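/- Let L, L̃ be self-adjoint operators on a finite-dimensional complex Hilbert space H with spectra contained in {0} ∪ [γ, ∞) for a common γ > 0, and let P, P̃ be the orthogonal projections onto ker L and ker L̃ respectively. Then ‖P − P̃‖ ≤ (2/γ) ‖L − L̃‖ in operator norm. -/

import Mathlib

lemma eig_mem_spectrum {H : Type*} [NormedAddCommGroup H] [InnerProductSpace ℂ H]
    [CompleteSpace H] (L : H →L[ℂ] H) (μ : ℂ) (v : H) (hv : v ≠ 0)
    (hLv : L v = μ • v) : μ ∈ spectrum ℂ L := by
  rw [spectrum.mem_iff]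
  intro h
  have h0 : (algebraMap ℂ (H →L[ℂ] H) μ - L) v = 0 := by
    simp [Algebra.algebraMap_eq_smul_one, hLv]
  have hv0 : (↑h.unit : H →L[ℂ] H) v = 0 := by rw [IsUnit.unit_spec]; exact h0
  apply hv
  calc v = ((↑h.unit⁻¹ * ↑h.unit : H →L[ℂ] H)) v := by rw [Units.inv_mul]; rfl
    _ = (↑h.unit⁻¹ : H →L[ℂ] H) ((↑h.unit : H →L[ℂ] H) v) := rfl
    _ = 0 := by rw [hv0]; simp

lemma ker_bound {H : Type*} [NormedAddCommGroup H] [InnerProductSpace ℂ H]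
    [FiniteDimensional ℂ H] (L : H →L[ℂ] H) (hL : IsSelfAdjoint L) (γ : ℝ) (hγ : 0 < γ)
    (hs : spectrum ℂ L ⊆ {0} ∪ (Complex.ofReal '' Set.Ici γ)) (x : H) :
    γ * ‖x - ((LinearMap.ker (L : H →ₗ[ℂ] H)).subtypeL.comp ((LinearMap.ker (L : H →ₗ[ℂ] H)).orthogonalProjectionOnto)) x‖
      ≤ ‖L x‖ := by
  have hT : (↑L : H →ₗ[ℂ] H).IsSymmetric :=
    ContinuousLinearMap.isSelfAdjoint_iff_isSymmetric.mp hL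
  set n := Module.finrank ℂ H with hn
  set b := hT.eigenvectorBasis rfl with hb
  set μ := hT.eigenvalues (rfl : Module.finrank ℂ H = n) with hμdef
  -- eigenvalues are 0 or ≥ γ
  have hμ : ∀ i, μ i = 0 ∨ γ ≤ μ i := by
    intro i
    have hev := hT.hasEigenvector_eigenvectorBasis (rfl : Module.finrank ℂ H = n) i
    have hmem : ((μ i : ℂ)) ∈ spectrum ℂ L := by
      refine eig_mem_spectrum L _ (b i) hev.2 ?_
      have := hT.apply_eigenvectorBasis (rfl : Module.finrank ℂ H = n) i
      exact this
    rcases hs hmem with h0 | ⟨r, hr, hre⟩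
    · left
      have := Set.mem_singleton_iff.mp h0
      exact_mod_cast this
    · right
      have : r = μ i := by exact_mod_cast hre
      exact this ▸ hr
  have hrep : ∀ (z : H) i, b.repr (L z) i = (μ i : ℂ) * b.repr z i := by
    intro z i
    exact hT.eigenvectorBasis_apply_self_apply rfl z i
  classical
  set f : EuclideanSpace ℂ (Fin n) := WithLp.toLp 2 (fun i => if μ i = 0 then b.repr x i else 0) with hf
  set y : H := b.repr.symm f with hy
  have hry : b.repr y = f := b.repr.apply_symm_apply f
  have hyk : y ∈ LinearMap.ker (L : H →ₗ[ℂ] H) := by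
    rw [LinearMap.mem_ker]
    have : b.repr (L y) = 0 := by
      ext i
      rw [hrep y i, hry]
      simp only [hf]
      by_cases h : μ i = 0 <;> simp [h]
    have := congrArg b.repr.symm this
    simpa using this
  have hzero : ∀ u ∈ LinearMap.ker (L : H →ₗ[ℂ] H), ∀ i, μ i ≠ 0 → b.repr u i = 0 := by
    intro u hu i hi
    have h1 : b.repr (L u) i = (μ i : ℂ) * b.repr u i := hrep u i
    rw [show L u = 0 from LinearMap.mem_ker.mp hu] at h1
    simp only [map_zero, WithLp.ofLp_zero, Pi.zero_apply] at h1
    have : (μ i : ℂ) ≠ 0 := by exact_mod_cast hi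
    field_simp at h1
    exact (mul_eq_zero.mp h1.symm).resolve_left this
  have hxy : x - y ∈ (LinearMap.ker (L : H →ₗ[ℂ] H))ᗮ := by
    rw [Submodule.mem_orthogonal]
    intro u hu
    rw [← b.repr.inner_map_map u (x - y)]
    rw [PiLp.inner_apply]
    apply Finset.sum_eq_zero
    intro i _
    by_cases h : μ i = 0
    · have : b.repr (x - y) i = 0 := by
        simp [map_sub, hry, hf, h]
      rw [this, inner_zero_right]
    · rw [hzero u hu i h]
      simp
  have hPx : (((LinearMap.ker (L : H →ₗ[ℂ] H)).orthogonalProjectionOnto x : H)) = y :=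
    by exact Submodule.eq_starProjection_of_mem_orthogonal hyk hxy
  have hPx' : x - ((LinearMap.ker (L : H →ₗ[ℂ] H)).subtypeL.comp ((LinearMap.ker (L : H →ₗ[ℂ] H)).orthogonalProjectionOnto)) x
      = x - y := by
    simp [ContinuousLinearMap.comp_apply, hPx]
  rw [hPx']
  -- now norm inequality via coordinates
  have h1 : ‖x - y‖ = ‖b.repr (x - y)‖ := (b.repr.norm_map _).symm
  have h2 : ‖L x‖ = ‖b.repr (L x)‖ := (b.repr.norm_map _).symm
  rw [h1, h2]
  rw [EuclideanSpace.norm_eq, EuclideanSpace.norm_eq]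
  rw [← Real.sqrt_sq (by positivity : (0:ℝ) ≤ γ), ← Real.sqrt_mul (by positivity)]
  apply Real.sqrt_le_sqrt
  rw [Finset.mul_sum]
  apply Finset.sum_le_sum
  intro i _
  have hxyi : b.repr (x - y) i = if μ i = 0 then 0 else b.repr x i := by
    simp only [map_sub, hry, hf]
    by_cases h : μ i = 0 <;> simp [h]
  rw [hrep x i, hxyi]
  by_cases h : μ i = 0
  · simp [h]
  · simp only [h, if_false]
    rw [norm_mul]
    have hγμ : γ ≤ μ i := (hμ i).resolve_left h
    have : ‖(μ i : ℂ)‖ = μ i := by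
      rw [Complex.norm_real, Real.norm_eq_abs, abs_of_nonneg (le_trans hγ.le hγμ)]
    rw [this, mul_pow]
    apply mul_le_mul_of_nonneg_right _ (by positivity)
    exact pow_le_pow_left₀ hγ.le hγμ 2

/-- If `L, L̃` are self-adjoint with spectra in `{0} ∪ [γ, ∞)` for a common
`γ > 0`, and `P, P̃` are the orthogonal projections onto their kernels, then
`‖P − P̃‖ ≤ (2/γ) ‖L − L̃‖`. -/
theorem stmt7 {H : Type*} [NormedAddCommGroup H] [InnerProductSpace ℂ H]
    [FiniteDimensional ℂ H]
    (L L' : H →L[ℂ] H) (hL : IsSelfAdjoint L) (hL' : IsSelfAdjoint L')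
    (γ : ℝ) (hγ : 0 < γ)
    (hs : spectrum ℂ L ⊆ {0} ∪ (Complex.ofReal '' Set.Ici γ))
    (hs' : spectrum ℂ L' ⊆ {0} ∪ (Complex.ofReal '' Set.Ici γ)) :
    ‖(LinearMap.ker (L : H →ₗ[ℂ] H)).subtypeL.comp ((LinearMap.ker (L : H →ₗ[ℂ] H)).orthogonalProjectionOnto)
      - (LinearMap.ker (L' : H →ₗ[ℂ] H)).subtypeL.comp ((LinearMap.ker (L' : H →ₗ[ℂ] H)).orthogonalProjectionOnto)‖
      ≤ (2 / γ) * ‖L - L'‖ := by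
  set P : H →L[ℂ] H := (LinearMap.ker (L : H →ₗ[ℂ] H)).subtypeL.comp ((LinearMap.ker (L : H →ₗ[ℂ] H)).orthogonalProjectionOnto)
    with hPdef
  set P' : H →L[ℂ] H := (LinearMap.ker (L' : H →ₗ[ℂ] H)).subtypeL.comp ((LinearMap.ker (L' : H →ₗ[ℂ] H)).orthogonalProjectionOnto)
    with hP'def
  have hPsa : IsSelfAdjoint P := isSelfAdjoint_starProjection _
  have hP'sa : IsSelfAdjoint P' := isSelfAdjoint_starProjection _
  -- bound on (1 - P) * P'
  have key : ∀ (A B : H →L[ℂ] H) (PA PB : H →L[ℂ] H),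
      IsSelfAdjoint A →
      (spectrum ℂ A ⊆ {0} ∪ (Complex.ofReal '' Set.Ici γ)) →
      PA = (LinearMap.ker (A : H →ₗ[ℂ] H)).subtypeL.comp ((LinearMap.ker (A : H →ₗ[ℂ] H)).orthogonalProjectionOnto) →
      PB = (LinearMap.ker (B : H →ₗ[ℂ] H)).subtypeL.comp ((LinearMap.ker (B : H →ₗ[ℂ] H)).orthogonalProjectionOnto) →
      ‖(1 - PA) * PB‖ ≤ (1 / γ) * ‖A - B‖ := by
    intro A B PA PB hA hsA hPA hPB
    apply ContinuousLinearMap.opNorm_le_bound _ (by positivity)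
    intro x
    have hxk : PB x ∈ LinearMap.ker (B : H →ₗ[ℂ] H) := by
      rw [hPB]; exact (((LinearMap.ker (B : H →ₗ[ℂ] H)).orthogonalProjectionOnto) x).2
    have hBx : B (PB x) = 0 := LinearMap.mem_ker.mp hxk
    have h1 : γ * ‖PB x - PA (PB x)‖ ≤ ‖A (PB x)‖ := by
      rw [hPA]
      exact ker_bound A hA γ hγ hsA (PB x)
    have h2 : A (PB x) = (A - B) (PB x) := by simp [hBx]
    have h3 : ‖A (PB x)‖ ≤ ‖A - B‖ * ‖PB x‖ := by
      rw [h2]; exact (A - B).le_opNorm _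
    have hPBn : ‖PB x‖ ≤ ‖x‖ := by
      rw [hPB]
      calc ‖(((LinearMap.ker (B : H →ₗ[ℂ] H)).orthogonalProjectionOnto) x : H)‖
          = ‖((LinearMap.ker (B : H →ₗ[ℂ] H)).orthogonalProjectionOnto) x‖ := rfl
        _ ≤ ‖x‖ := by
            have := ((LinearMap.ker (B : H →ₗ[ℂ] H)).orthogonalProjectionOnto).le_opNorm x
            calc ‖((LinearMap.ker (B : H →ₗ[ℂ] H)).orthogonalProjectionOnto) x‖
                ≤ ‖(LinearMap.ker (B : H →ₗ[ℂ] H)).orthogonalProjectionOnto‖ * ‖x‖ := this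
              _ ≤ 1 * ‖x‖ := by
                  apply mul_le_mul_of_nonneg_right (Submodule.orthogonalProjectionOnto_norm_le _) (norm_nonneg _)
              _ = ‖x‖ := one_mul _
    have h4 : ((1 - PA) * PB) x = PB x - PA (PB x) := by
      simp [ContinuousLinearMap.mul_apply, ContinuousLinearMap.sub_apply]
    rw [h4]
    rw [div_mul_eq_mul_div, div_mul_eq_mul_div, le_div_iff₀ hγ, one_mul]
    calc ‖PB x - PA (PB x)‖ * γ = γ * ‖PB x - PA (PB x)‖ := mul_comm _ _
      _ ≤ ‖A (PB x)‖ := h1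
      _ ≤ ‖A - B‖ * ‖PB x‖ := h3
      _ ≤ ‖A - B‖ * ‖x‖ := mul_le_mul_of_nonneg_left hPBn (norm_nonneg _)
  have hb1 : ‖(1 - P) * P'‖ ≤ (1 / γ) * ‖L - L'‖ :=
    key L L' P P' hL hs hPdef hP'def
  have hb2 : ‖(1 - P') * P‖ ≤ (1 / γ) * ‖L - L'‖ := by
    have := key L' L P' P hL' hs' hP'def hPdef
    rwa [norm_sub_rev] at this
  have hb2' : ‖P * (1 - P')‖ ≤ (1 / γ) * ‖L - L'‖ := by
    have hst : ‖P * (1 - P')‖ = ‖(1 - P') * P‖ := by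
      rw [← norm_star (P * (1 - P')), star_mul, hPsa.star_eq]
      congr 2
      rw [star_sub, star_one, hP'sa.star_eq]
    rw [hst]; exact hb2
  have hdecomp : P - P' = P * (1 - P') - (1 - P) * P' := by
    noncomm_ring
  calc ‖P - P'‖ = ‖P * (1 - P') - (1 - P) * P'‖ := by rw [hdecomp]
    _ ≤ ‖P * (1 - P')‖ + ‖(1 - P) * P'‖ := norm_sub_le _ _
    _ ≤ (1 / γ) * ‖L - L'‖ + (1 / γ) * ‖L - L'‖ := add_le_add hb2' hb1
    _ = (2 / γ) * ‖L - L'‖ := by ring
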